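/- Let Q(f) = ρ_f M_{Θ_f} − f where ρ_f = ∫ f dA, J_f = ∫ f(A) A dA, Θ_f is the special-orthogonal polar factor of J_f (assumed to have positive determinant), and M_Θ(A) = Z^{-1}exp(κ Θ·A). Then ∫_{SO(n,ℝ)} Q(f)(A)(AΘ_f^T − Θ_f A^T) dA = 0 for every integrable f : SO(n,ℝ) → ℝ with det J_f > 0. -/

import Mathlib

open MeasureTheory Matrix

noncomputable section

/-- A measurable space structure on matrices (the product σ-algebra on entries). -/
instance matMS (n : ℕ) : MeasurableSpace (Matrix (Fin n) (Fin n) ℝ) :=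
  (by infer_instance : MeasurableSpace (Fin n → Fin n → ℝ))

/-- The special orthogonal group `SO(n, ℝ)`, as the subgroup of the orthogonal group
consisting of matrices of determinant one. -/
def SOsub (n : ℕ) : Subgroup (Matrix.orthogonalGroup (Fin n) ℝ) where
  carrier := {A | (A : Matrix (Fin n) (Fin n) ℝ).det = 1}
  one_mem' := by simp
  mul_mem' := by
    intro a b ha hb
    simp only [Set.mem_setOf_eq, Submonoid.coe_mul, Matrix.det_mul] at *
    rw [ha, hb, mul_one]
  inv_mem' := by
    intro a ha
    simp only [Set.mem_setOf_eq] at *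
    have h : ((a⁻¹ : Matrix.orthogonalGroup (Fin n) ℝ) : Matrix (Fin n) (Fin n) ℝ)
        = star (a : Matrix (Fin n) (Fin n) ℝ) := rfl
    rw [h, Matrix.star_eq_conjTranspose, Matrix.det_conjTranspose, ha, star_one]

/-- Elements of `SO(n, ℝ)`. -/
abbrev SO (n : ℕ) := SOsub n

/-- The underlying matrix of an element of `SO(n, ℝ)`. -/
def mat {n : ℕ} (A : SO n) : Matrix (Fin n) (Fin n) ℝ :=
  ((A : Matrix.orthogonalGroup (Fin n) ℝ) : Matrix (Fin n) (Fin n) ℝ)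

instance matBorel (n : ℕ) : BorelSpace (Matrix (Fin n) (Fin n) ℝ) := Pi.borelSpace

lemma borelSpace_subtype {α : Type*} [TopologicalSpace α] [MeasurableSpace α] [BorelSpace α]
    (p : α → Prop) : BorelSpace (Subtype p) := ⟨by borelize α; symm; apply borel_comap⟩

instance OGBorel (n : ℕ) : BorelSpace (Matrix.orthogonalGroup (Fin n) ℝ) :=
  borelSpace_subtype _
instance SOBorel (n : ℕ) : BorelSpace (SO n) := borelSpace_subtype _

lemma continuous_mat (n : ℕ) : Continuous (mat (n := n)) :=
  continuous_subtype_val.comp continuous_subtype_val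

lemma mat_mul {n : ℕ} (A B : SO n) : mat (A * B) = mat A * mat B := rfl
lemma mat_one {n : ℕ} : mat (1 : SO n) = 1 := rfl
lemma mat_inv {n : ℕ} (A : SO n) : mat A⁻¹ = (mat A)ᵀ := by
  have h : mat A⁻¹ = star (mat A) := rfl
  rw [h, Matrix.star_eq_conjTranspose, Matrix.conjTranspose_eq_transpose_of_trivial]

lemma mat_mul_transpose {n : ℕ} (A : SO n) : mat A * (mat A)ᵀ = 1 := by
  have h2 := (Unitary.mem_iff.mp A.1.2).2
  rwa [Matrix.star_eq_conjTranspose, Matrix.conjTranspose_eq_transpose_of_trivial] at h2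

lemma transpose_mul_mat {n : ℕ} (A : SO n) : (mat A)ᵀ * mat A = 1 := by
  have h1 := (Unitary.mem_iff.mp A.1.2).1
  rwa [Matrix.star_eq_conjTranspose, Matrix.conjTranspose_eq_transpose_of_trivial] at h1

instance SOTopGroup (n : ℕ) : IsTopologicalGroup (SO n) where
  continuous_mul := by
    apply Continuous.subtype_mk
    apply Continuous.subtype_mk
    exact ((continuous_mat n).comp continuous_fst).mul ((continuous_mat n).comp continuous_snd)
  continuous_inv := by
    apply Continuous.subtype_mk
    apply Continuous.subtype_mk
    exact continuous_star.comp (continuous_mat n)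

lemma range_mat_eq {n : ℕ} : Set.range (mat (n := n)) =
    {M : Matrix (Fin n) (Fin n) ℝ | M * Mᵀ = 1 ∧ M.det = 1} := by
  ext M
  constructor
  · rintro ⟨A, rfl⟩
    exact ⟨mat_mul_transpose A, A.2⟩
  · rintro ⟨h1, h2⟩
    have hmem : M ∈ Matrix.orthogonalGroup (Fin n) ℝ := by
      rw [Matrix.mem_orthogonalGroup_iff]
      exact h1
    exact ⟨⟨⟨M, hmem⟩, h2⟩, rfl⟩

lemma inducing_mat (n : ℕ) : Topology.IsInducing (mat (n := n)) :=
  Topology.IsInducing.subtypeVal.comp Topology.IsInducing.subtypeVal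

instance SOCompact (n : ℕ) : CompactSpace (SO n) := by
  rw [← isCompact_univ_iff, (inducing_mat n).isCompact_iff, Set.image_univ, range_mat_eq]
  apply IsCompact.of_isClosed_subset (s := (show Set (Matrix (Fin n) (Fin n) ℝ) from
      Set.pi Set.univ fun _ : Fin n => (Set.pi Set.univ fun _ : Fin n => Set.Icc (-1 : ℝ) 1)))
  · exact isCompact_univ_pi fun _ => isCompact_univ_pi fun _ => isCompact_Icc
  · exact (isClosed_eq (continuous_id.matrix_mul continuous_id.matrix_transpose)
        continuous_const).inter (isClosed_eq continuous_id.matrix_det continuous_const)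
  · intro M hM
    obtain ⟨h1, -⟩ := hM
    intro i _ j _
    have h1' : (M * Mᵀ) i i = 1 := by rw [h1]; simp [Matrix.one_apply]
    rw [Matrix.mul_apply] at h1'
    simp only [Matrix.transpose_apply] at h1'
    have hle : M i j * M i j ≤ 1 := by
      rw [← h1']
      exact Finset.single_le_sum (fun k _ => mul_self_nonneg (M i k)) (Finset.mem_univ j)
    constructor <;> nlinarith
section
variable {n : ℕ} (μ : Measure (SO n)) [IsProbabilityMeasure μ] [μ.IsHaarMeasure]

set_option synthInstance.maxHeartbeats 1000000 in
instance SOLocCompact : LocallyCompactSpace (SO n) := inferInstance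

lemma right_inv (g : SO n) : Measure.map (· * g) μ = μ := by
  have hmeas : Measurable (· * g : SO n → SO n) := measurable_mul_const g
  haveI : IsProbabilityMeasure (Measure.map (· * g) μ) :=
    Measure.isProbabilityMeasure_map hmeas.aemeasurable
  haveI : (Measure.map (· * g) μ).IsMulLeftInvariant := by
    constructor
    intro h
    rw [Measure.map_map (measurable_const_mul h) hmeas]
    have hcomp : ((h * ·) ∘ (· * g) : SO n → SO n) = ((· * g) ∘ (h * ·)) :=
      funext fun x => (mul_assoc h x g).symm
    rw [hcomp, ← Measure.map_map hmeas (measurable_const_mul h),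
      map_mul_left_eq_self μ h]
  haveI : (Measure.map (· * g) μ).IsOpenPosMeasure :=
    (continuous_mul_right g).isOpenPosMeasure_map (Homeomorph.mulRight g).surjective
  haveI : (Measure.map (· * g) μ).IsHaarMeasure :=
    { toIsFiniteMeasureOnCompacts := inferInstance
      toIsMulLeftInvariant := inferInstance
      toIsOpenPosMeasure := inferInstance }
  exact Measure.isHaarMeasure_eq_of_isProbabilityMeasure _ μ

lemma mul_right_invariant : μ.IsMulRightInvariant := ⟨right_inv μ⟩

lemma inv_invariant : μ.IsInvInvariant := by
  haveI := mul_right_invariant μ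
  haveI : IsProbabilityMeasure μ.inv :=
    Measure.isProbabilityMeasure_map measurable_inv.aemeasurable
  haveI : μ.inv.IsHaarMeasure :=
    { toIsFiniteMeasureOnCompacts := inferInstance
      toIsMulLeftInvariant := inferInstance
      toIsOpenPosMeasure := inferInstance }
  exact ⟨Measure.isHaarMeasure_eq_of_isProbabilityMeasure _ μ⟩
end

lemma abs_mat_le_one {n : ℕ} (A : SO n) (i j : Fin n) : |mat A i j| ≤ 1 := by
  have h1' : (mat A * (mat A)ᵀ) i i = 1 := by rw [mat_mul_transpose]; simp [Matrix.one_apply]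
  rw [Matrix.mul_apply] at h1'
  simp only [Matrix.transpose_apply] at h1'
  have hle : mat A i j * mat A i j ≤ 1 := by
    rw [← h1']
    exact Finset.single_le_sum (fun k _ => mul_self_nonneg (mat A i k)) (Finset.mem_univ j)
  nlinarith [abs_nonneg (mat A i j), sq_abs (mat A i j)]


/-- Generalized collision invariance for the BGK operator `Q(f) = ρ_f M_{Θ_f} − f`:
`∫ Q(f)(A) (A Θ_fᵀ − Θ_f Aᵀ) dA = 0` whenever `Θ_f` is the special-orthogonal polar
factor of `J_f = ∫ f(A) A dA` (so `J_f Θ_fᵀ` is symmetric) and `det J_f > 0`.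
Here `M_Θ(A) = Z⁻¹ exp(κ Tr(Θᵀ A))` with `Z = ∫ exp(κ Tr A) dA`, `ρ_f = ∫ f dA`,
and the matrix-valued identity is stated entrywise. -/
theorem stmt_19 (n : ℕ) (hn : 3 ≤ n) (κ : ℝ) (hκ : 0 < κ)
    (μ : Measure (SO n)) [IsProbabilityMeasure μ] [μ.IsHaarMeasure]
    (f : SO n → ℝ) (hf : Integrable f μ)
    (Jf : Matrix (Fin n) (Fin n) ℝ)
    (hJf : ∀ i j, Jf i j = ∫ A, f A * mat A i j ∂μ)
    (hdet : 0 < Jf.det)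
    (Θf : SO n)
    (hpolar : (Jf * (mat Θf)ᵀ)ᵀ = Jf * (mat Θf)ᵀ) :
    ∀ i j,
      ∫ A, ((∫ B, f B ∂μ) *
            (Real.exp (κ * ((mat Θf)ᵀ * mat A).trace) /
              ∫ B, Real.exp (κ * (mat B).trace) ∂μ) - f A) *
          ((mat A * (mat Θf)ᵀ - mat Θf * (mat A)ᵀ) i j) ∂μ = 0 := by
  intro i j
  haveI := mul_right_invariant μ
  haveI := inv_invariant μ
  set Θ : Matrix (Fin n) (Fin n) ℝ := mat Θf with hΘ
  set ρ : ℝ := ∫ B, f B ∂μ with hρ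
  set Z : ℝ := ∫ B, Real.exp (κ * (mat B).trace) ∂μ with hZ
  set X : SO n → ℝ := fun A => (mat A * Θᵀ - Θ * (mat A)ᵀ) i j with hX
  set e : SO n → ℝ := fun A => Real.exp (κ * (Θᵀ * mat A).trace) with he
  -- continuity
  have cX : Continuous X := by
    apply Continuous.matrix_elem
    exact ((continuous_mat n).matrix_mul continuous_const).sub
      (continuous_const.matrix_mul (continuous_mat n).matrix_transpose)
  have ce : Continuous e :=
    Real.continuous_exp.comp
      (continuous_const.mul (continuous_const.matrix_mul (continuous_mat n)).matrix_trace)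
  -- integrability
  have cont_int : ∀ {g : SO n → ℝ}, Continuous g → Integrable g μ := fun hg =>
    hg.integrable_of_hasCompactSupport (isClosed_tsupport _).isCompact
  have hu : Integrable (fun A => ρ / Z * (e A * X A)) μ :=
    (cont_int (ce.mul cX)).const_mul _
  haveI : Nonempty (SO n) := ⟨1⟩
  have hXbdd : ∃ C, ∀ A, ‖X A‖ ≤ C := by
    obtain ⟨A₀, -, hA₀⟩ := isCompact_univ.exists_isMaxOn Set.univ_nonempty
      cX.norm.continuousOn
    exact ⟨‖X A₀‖, fun A => hA₀ (Set.mem_univ A)⟩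
  have hv : Integrable (fun A => X A * f A) μ := hf.bdd_mul cX.aestronglyMeasurable (Filter.Eventually.of_forall hXbdd.choose_spec)
  have hv' : Integrable (fun A => f A * X A) μ := by
    simpa only [mul_comm] using hv
  -- split the integral
  have hsplit : (fun A => (ρ * (e A / Z) - f A) * X A)
      = fun A => ρ / Z * (e A * X A) - f A * X A := by
    funext A; ring
  rw [show (∫ A, (ρ * (e A / Z) - f A) * X A ∂μ)
        = ∫ A, (ρ / Z * (e A * X A) - f A * X A) ∂μ by rw [hsplit],
    integral_sub hu hv']
  -- Part 1 : ∫ e * X = 0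
  have hpart1 : ∫ A, e A * X A ∂μ = 0 := by
    set ψ : SO n → ℝ := fun B => Real.exp (κ * (mat B).trace) * ((mat B - (mat B)ᵀ) i j) with hψ
    have hcomp : ∀ B : SO n, e (B * Θf) * X (B * Θf) = ψ B := by
      intro B
      have hm : mat (B * Θf) = mat B * Θ := rfl
      have htr : (Θᵀ * (mat B * Θ)).trace = (mat B).trace := by
        rw [Matrix.trace_mul_comm, mul_assoc, mat_mul_transpose, mul_one]
      have hX1 : mat B * Θ * Θᵀ = mat B := by
        rw [mul_assoc, mat_mul_transpose, mul_one]
      have hX2 : Θ * (mat B * Θ)ᵀ = (mat B)ᵀ := by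
        rw [Matrix.transpose_mul, ← mul_assoc, mat_mul_transpose, one_mul]
      simp only [he, hX, hψ, hm, htr, hX1, hX2]
    have hstep1 : ∫ A, e A * X A ∂μ = ∫ B, ψ B ∂μ := by
      rw [← (measurePreserving_mul_right μ Θf).integral_comp
        (MeasurableEquiv.mulRight Θf).measurableEmbedding (fun A => e A * X A)]
      exact integral_congr_ae (Filter.Eventually.of_forall hcomp)
    have hneg : ∀ B : SO n, ψ B⁻¹ = -ψ B := by
      intro B
      simp only [hψ, mat_inv, Matrix.transpose_transpose, Matrix.trace_transpose]
      rw [show ((mat B)ᵀ - mat B) i j = -((mat B - (mat B)ᵀ) i j) by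
        simp [Matrix.sub_apply]]
      ring
    have hstep2 : ∫ B, ψ B ∂μ = -∫ B, ψ B ∂μ := by
      conv_lhs => rw [← (Measure.measurePreserving_inv μ).integral_comp
        (MeasurableEquiv.inv (SO n)).measurableEmbedding ψ]
      rw [show (fun B : SO n => ψ B⁻¹) = fun B => -ψ B from funext hneg, integral_neg]
    rw [hstep1]
    linarith [hstep2]
  -- Part 2 : ∫ f * X = 0
  have hpart2 : ∫ A, f A * X A ∂μ = 0 := by
    have hXsum : ∀ A : SO n, f A * X A
        = ∑ k, (f A * mat A i k * Θ j k - Θ i k * (f A * mat A j k)) := by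
      intro A
      simp only [hX, Matrix.sub_apply, Matrix.mul_apply, Matrix.transpose_apply,
        Finset.mul_sum, ← Finset.sum_sub_distrib]
      congr 1; funext k; ring
    have hint_entry : ∀ (a b : Fin n), Integrable (fun A => f A * mat A a b) μ := by
      intro a b
      have : Integrable (fun A => mat A a b * f A) μ := by
        apply hf.bdd_mul (c := 1) ((continuous_mat n).matrix_elem a b).aestronglyMeasurable
        exact Filter.Eventually.of_forall (fun A => by simpa [Real.norm_eq_abs] using abs_mat_le_one A a b)
      simpa only [mul_comm] using this
    have := fun (k : Fin n) => ((hint_entry i k).mul_const (Θ j k)).sub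
      ((hint_entry j k).const_mul (Θ i k))
    calc ∫ A, f A * X A ∂μ
        = ∫ A, ∑ k, (f A * mat A i k * Θ j k - Θ i k * (f A * mat A j k)) ∂μ :=
          integral_congr_ae (Filter.Eventually.of_forall hXsum)
      _ = ∑ k, ∫ A, (f A * mat A i k * Θ j k - Θ i k * (f A * mat A j k)) ∂μ :=
          integral_finset_sum _ (fun k _ => this k)
      _ = ∑ k, (Jf i k * Θ j k - Θ i k * Jf j k) := by
          refine Finset.sum_congr rfl fun k _ => ?_
          rw [integral_sub ((hint_entry i k).mul_const (Θ j k))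
            ((hint_entry j k).const_mul (Θ i k)),
            integral_mul_const, integral_const_mul, hJf i k, hJf j k]
      _ = (Jf * Θᵀ) i j - (Θ * Jfᵀ) i j := by
          simp only [Matrix.mul_apply, Matrix.transpose_apply, Finset.sum_sub_distrib]
      _ = 0 := by
          have h2 : Θ * Jfᵀ = Jf * Θᵀ := by
            conv_rhs => rw [← hpolar]
            rw [Matrix.transpose_mul, Matrix.transpose_transpose]
          rw [h2]; ring
  rw [integral_const_mul, hpart1, hpart2, mul_zero, sub_zero]
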